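/- arXiv:2206.14725 — 2 statements merged into one kernel-verified Lean document; each statement's English description precedes it below -/
import Mathlib

section
/- Let x : ℝ → X be a curve in a Riemannian manifold and f : X → ℝ a smooth function with x'(t) = −(grad f)(x(t)). Suppose there exist constants α > 0, ½ < γ < 1, and a Łojasiewicz-type estimate ‖grad f(x(t))‖ ≥ α⁻¹ |f(x(t)) − f_∞|^γ for t ≥ T. Then the limit x_∞ = lim_{t→∞} x(t) exists and d(x(t), x_∞) ≤ (α/(1−γ)) (f(x(t)) − f_∞)^{1−γ} for t > T. -/
open Filter Set Topology

/-- Łojasiewicz-type convergence of the negative gradient flow: if `x' = −grad f(x)`,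
`f(x t) ≥ f∞`, and `‖grad f (x t)‖ ≥ α⁻¹ (f (x t) − f∞)^γ` for `t ≥ T` with `α > 0`
and `½ < γ < 1`, then `x t` converges to some `x∞` and
`dist (x t) x∞ ≤ (α/(1−γ)) (f (x t) − f∞)^{1−γ}` for `t > T`. -/
theorem gradient_flow_convergence {X : Type*}
    [NormedAddCommGroup X] [InnerProductSpace ℝ X] [CompleteSpace X]
    (f : X → ℝ) (gf : X → X) (hf : ∀ y, HasGradientAt f (gf y) y)
    (x : ℝ → X) (hx : ∀ t, HasDerivAt x (-gf (x t)) t)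
    (α γ T finf : ℝ) (hα : 0 < α) (hγ : 1 / 2 < γ) (hγ1 : γ < 1)
    (hbelow : ∀ t, T ≤ t → finf ≤ f (x t))
    (hloja : ∀ t, T ≤ t → α⁻¹ * (f (x t) - finf) ^ γ ≤ ‖gf (x t)‖) :
    ∃ xinf : X, Tendsto x atTop (nhds xinf) ∧
      ∀ t, T < t → dist (x t) xinf ≤ α / (1 - γ) * (f (x t) - finf) ^ (1 - γ) := by
  have hγ0 : 0 < γ := by linarith
  have h1γ : 0 < 1 - γ := by linarith
  set c : ℝ := α / (1 - γ) with hc_def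
  have hc : 0 < c := div_pos hα h1γ
  set g : ℝ → ℝ := fun t => f (x t) - finf with hg_def
  -- derivative of g
  have hg' : ∀ t, HasDerivAt g (-‖gf (x t)‖ ^ 2) t := by
    intro t
    have h1 : HasDerivAt (fun t => f (x t))
        ((InnerProductSpace.toDual ℝ X (gf (x t))) (-gf (x t))) t :=
      (hf (x t)).hasFDerivAt.comp_hasDerivAt t (hx t)
    have h2 : ((InnerProductSpace.toDual ℝ X (gf (x t))) (-gf (x t))) = -‖gf (x t)‖ ^ 2 := by
      rw [InnerProductSpace.toDual_apply_apply, inner_neg_right, real_inner_self_eq_norm_sq]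
    rw [h2] at h1
    exact h1.sub_const finf
  -- g is antitone
  have hganti : Antitone g := by
    apply antitone_of_deriv_nonpos
    · intro t; exact (hg' t).differentiableAt
    · intro t; rw [(hg' t).deriv]; exact neg_nonpos.2 (sq_nonneg _)
  -- g ≥ 0 everywhere
  have hg0 : ∀ t, 0 ≤ g t := by
    intro t
    rcases le_total T t with h | h
    · exact sub_nonneg.2 (hbelow t h)
    · exact le_trans (sub_nonneg.2 (hbelow T le_rfl)) (hganti h)
  -- the key length estimate
  set B' : ℝ → ℝ := fun s => α * (g s) ^ (-γ) * ‖gf (x s)‖ ^ 2 with hB'_def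
  have key : ∀ a b, T ≤ a → a ≤ b →
      ‖x b - x a‖ ≤ c * g a ^ (1 - γ) - c * g b ^ (1 - γ) := by
    intro a b hTa hab
    set B : ℝ → ℝ := fun s => c * g a ^ (1 - γ) - c * g s ^ (1 - γ) with hB_def
    have hBcont : ContinuousOn B (Icc a b) := by
      apply ContinuousOn.sub continuousOn_const
      apply ContinuousOn.mul continuousOn_const
      apply Continuous.continuousOn
      apply Continuous.rpow_const
      · exact continuous_iff_continuousAt.2 fun t => (hg' t).differentiableAt.continuousAt
      · intro _; right; exact le_of_lt h1γ
    have hBd : ∀ s ∈ Ico a b, HasDerivWithinAt B (B' s) (Ici s) s := by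
      intro s hs
      rcases eq_or_lt_of_le (hg0 s) with h0 | hpos
      · -- g s = 0 : g ≡ 0 on Ici s, B constant there
        have hzero : ∀ u ∈ Ici s, g u = 0 :=
          fun u hu => le_antisymm (h0 ▸ hganti hu) (hg0 u)
        have hB's : B' s = 0 := by
          simp only [hB'_def]
          simp only [← h0, Real.zero_rpow (neg_ne_zero.2 (ne_of_gt hγ0)), mul_zero, zero_mul]
        rw [hB's]
        have : HasDerivWithinAt (fun _ : ℝ => c * g a ^ (1 - γ) - c * (0:ℝ) ^ (1 - γ))
            0 (Ici s) s := hasDerivWithinAt_const s _ _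
        apply this.congr
        · intro u hu; rw [hB_def]; simp [hzero u hu]
        · rw [hB_def]; simp [hzero s self_mem_Ici]
      · -- g s > 0
        have hrd : HasDerivAt (fun u => g u ^ (1 - γ))
            (-‖gf (x s)‖ ^ 2 * (1 - γ) * g s ^ (1 - γ - 1)) s :=
          (hg' s).rpow_const (Or.inl (ne_of_gt hpos))
        have : HasDerivAt B (B' s) s := by
          have := ((hrd.const_mul c).const_sub (c * g a ^ (1 - γ)))
          refine this.congr_deriv ?_
          rw [hB'_def, hc_def]
          have h1 : (1 : ℝ) - γ - 1 = -γ := by ring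
          rw [h1]
          field_simp
        exact this.hasDerivWithinAt
    have hbound : ∀ s ∈ Ico a b, ‖-gf (x s)‖ ≤ B' s := by
      intro s hs
      have hTs : T ≤ s := le_trans hTa hs.1
      have hl := hloja s hTs
      rw [norm_neg]
      rcases eq_or_lt_of_le (hg0 s) with h0 | hpos
      · -- g s = 0 : then gf (x s) = 0
        have hzero : ∀ u ∈ Ici s, g u = 0 :=
          fun u hu => le_antisymm (h0 ▸ hganti hu) (hg0 u)
        have hwd : HasDerivWithinAt g (-‖gf (x s)‖ ^ 2) (Ici s) s :=
          (hg' s).hasDerivWithinAt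
        have hwc : HasDerivWithinAt g 0 (Ici s) s := by
          apply (hasDerivWithinAt_const s (Ici s) (0:ℝ)).congr
          · intro u hu; exact hzero u hu
          · exact hzero s self_mem_Ici
        have hu : UniqueDiffWithinAt ℝ (Ici s) s := uniqueDiffOn_Ici s s self_mem_Ici
        have : -‖gf (x s)‖ ^ 2 = 0 := by
          rw [← hwd.derivWithin hu, ← hwc.derivWithin hu]
        have hn0 : ‖gf (x s)‖ = 0 := by nlinarith [norm_nonneg (gf (x s))]
        rw [hn0, hB'_def]
        simp only [← h0, Real.zero_rpow (neg_ne_zero.2 (ne_of_gt hγ0))]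
        simp
      · -- g s > 0
        have hgpow : 0 < g s ^ γ := Real.rpow_pos_of_pos hpos γ
        have hgfpos : 0 < ‖gf (x s)‖ :=
          lt_of_lt_of_le (mul_pos (inv_pos.2 hα) hgpow) hl
        simp only [hB'_def]
        have hneg : g s ^ (-γ) = (g s ^ γ)⁻¹ := Real.rpow_neg (le_of_lt hpos) γ ▸ rfl
        rw [hneg]
        have key2 : 1 ≤ α * (g s ^ γ)⁻¹ * ‖gf (x s)‖ := by
          have h3 := mul_le_mul_of_nonneg_left hl
            (le_of_lt (mul_pos hα (inv_pos.2 hgpow)))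
          calc (1:ℝ) = α * (g s ^ γ)⁻¹ * (α⁻¹ * g s ^ γ) := by
                field_simp
            _ ≤ α * (g s ^ γ)⁻¹ * ‖gf (x s)‖ := h3
        nlinarith [mul_le_mul_of_nonneg_right key2 (le_of_lt hgfpos)]
    have hxc : ContinuousOn (fun s => x s - x a) (Icc a b) := by
      apply ContinuousOn.sub _ continuousOn_const
      exact (continuous_iff_continuousAt.2 fun t => (hx t).continuousAt).continuousOn
    have hxd : ∀ s ∈ Ico a b, HasDerivWithinAt (fun s => x s - x a) (-gf (x s)) (Ici s) s :=
      fun s _ => ((hx s).sub_const (x a)).hasDerivWithinAt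
    have hBa : ‖x a - x a‖ ≤ B a := by rw [hB_def]; simp
    have := image_norm_le_of_norm_deriv_right_le_deriv_boundary' hxc hxd hBa hBcont hBd hbound
      (right_mem_Icc.2 hab)
    exact this
  set φ : ℝ → ℝ := fun t => c * g t ^ (1 - γ) with hφ_def
  have hφ0 : ∀ t, 0 ≤ φ t := by
    intro t
    exact mul_nonneg (le_of_lt hc) (Real.rpow_nonneg (hg0 t) _)
  have hφanti : Antitone φ := by
    intro s t hst
    exact mul_le_mul_of_nonneg_left
      (Real.rpow_le_rpow (hg0 t) (hganti hst) (le_of_lt h1γ)) (le_of_lt hc)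
  have hφlim : ∃ l, Tendsto φ atTop (𝓝 l) := by
    refine ⟨⨅ i, φ i, tendsto_atTop_ciInf hφanti ⟨0, ?_⟩⟩
    rintro r ⟨i, rfl⟩
    exact hφ0 i
  obtain ⟨l, hl⟩ := hφlim
  have hφcauchy : CauchySeq φ := hl.cauchySeq
  have hxcauchy : CauchySeq x := by
    rw [Metric.cauchySeq_iff]
    intro ε hε
    obtain ⟨N, hN⟩ := Metric.cauchySeq_iff.1 hφcauchy ε hε
    refine ⟨max N T, fun m hm n hn => ?_⟩
    have hmT : T ≤ m := le_trans (le_max_right N T) hm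
    have hnT : T ≤ n := le_trans (le_max_right N T) hn
    have hφd := hN m (le_trans (le_max_left N T) hm) n (le_trans (le_max_left N T) hn)
    rcases le_total m n with h | h
    · have := key m n hmT h
      rw [dist_eq_norm, norm_sub_rev]
      calc ‖x n - x m‖ ≤ φ m - φ n := this
        _ ≤ |φ m - φ n| := le_abs_self _
        _ = dist (φ m) (φ n) := (Real.dist_eq _ _).symm
        _ < ε := hφd
    · have := key n m hnT h
      rw [dist_eq_norm]
      calc ‖x m - x n‖ ≤ φ n - φ m := this
        _ ≤ |φ n - φ m| := le_abs_self _
        _ = dist (φ n) (φ m) := (Real.dist_eq _ _).symm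
        _ = dist (φ m) (φ n) := dist_comm _ _
        _ < ε := hφd
  obtain ⟨xinf, hxinf⟩ := cauchySeq_tendsto_of_complete hxcauchy
  refine ⟨xinf, hxinf, fun t ht => ?_⟩
  have hdist : Tendsto (fun b => dist (x t) (x b)) atTop (𝓝 (dist (x t) xinf)) :=
    tendsto_const_nhds.dist hxinf
  have hev : ∀ᶠ b in atTop, dist (x t) (x b) ≤ c * g t ^ (1 - γ) := by
    filter_upwards [eventually_ge_atTop t] with b hb
    have := key t b (le_of_lt ht) hb
    rw [dist_eq_norm, norm_sub_rev]
    calc ‖x b - x t‖ ≤ φ t - φ b := this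
      _ ≤ φ t := by linarith [hφ0 b]
  exact le_of_tendsto hdist hev
end

section
/- Let g : ℝ → G be a curve in a Lie group G acting smoothly on a manifold X, satisfying g(0) = e and g(t)⁻¹ g'(t) = β_X-data in the sense that the curve x(t) := g(t)⁻¹ · x₀ satisfies x'(t) = −(β(x(t)))_X(x(t)) where β(y) = μ_p(y). Then the negative gradient flow line of f_p = ½‖μ_p‖² through x₀ stays in the G-orbit of x₀: x(t) = g(t)⁻¹ x₀ for all t. -/
/-- If `v` is a Lipschitz vector field (the gradient field of `f_p`), `y` is the negative
gradient flow line through `x₀`, and `g : ℝ → G` satisfies `g 0 = 1` together with the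
property that `t ↦ g(t)⁻¹ • x₀` also solves the negative gradient flow equation, then
`y t = g(t)⁻¹ • x₀` for all `t`; in particular the flow line stays in the `G`-orbit of `x₀`. -/
theorem gradient_flow_in_orbit {G X : Type*} [Group G]
    [NormedAddCommGroup X] [NormedSpace ℝ X] [MulAction G X]
    (L : NNReal) (v : X → X) (hv : LipschitzWith L v)
    (x₀ : X) (y : ℝ → X) (hy0 : y 0 = x₀)
    (hy : ∀ t, HasDerivAt y (-v (y t)) t)
    (g : ℝ → G) (hg0 : g 0 = 1)
    (hg : ∀ t : ℝ, HasDerivAt (fun s => (g s)⁻¹ • x₀) (-v ((g t)⁻¹ • x₀)) t) :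
    ∀ t : ℝ, y t = (g t)⁻¹ • x₀ ∧ y t ∈ MulAction.orbit G x₀ := by
  have key : ∀ t : ℝ, y t = (g t)⁻¹ • x₀ := by
    intro t
    set z : ℝ → X := fun s => (g s)⁻¹ • x₀ with hz
    have hvK : ∀ s : ℝ, LipschitzOnWith L (fun x => -v x) Set.univ := fun s => by
      have : LipschitzWith L (-v) := hv.neg
      exact (by simpa [Pi.neg_def] using this : LipschitzWith L fun x => -v x).lipschitzOnWith
    have h0 : (0 : ℝ) ∈ Set.Ioo (-(|t| + 1)) (|t| + 1) := by
      constructor <;> [nlinarith [abs_nonneg t]; nlinarith [abs_nonneg t]]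
    have heq0 : y 0 = z 0 := by simp [hz, hy0, hg0]
    have := ODE_solution_unique_of_mem_Ioo (v := fun _ x => -v x)
      (s := fun _ => Set.univ) (K := L) (fun s _ => hvK s) h0
      (fun s _ => ⟨hy s, Set.mem_univ _⟩)
      (fun s _ => ⟨hg s, Set.mem_univ _⟩) heq0
    exact this ⟨by nlinarith [abs_nonneg t, neg_abs_le t], by nlinarith [le_abs_self t]⟩
  intro t
  refine ⟨key t, ?_⟩
  rw [key t]
  exact ⟨(g t)⁻¹, rfl⟩
end
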